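/- Let A ∈ ℂ^{p×n} and B ∈ ℂ^{n×q} have SVDs A = U₁Σ₁V* and B = UΣ₂V₂*. Suppose Ω ∈ ℂ^{m×n} satisfies the entrywise bound |(V*Ω*ΩU − V*U)_{k,j}| ≤ ε for all k ∈ [p], j ∈ [q]. Then ‖AΩ*ΩB − AB‖_F ≤ ε‖A‖_F‖B‖_F. -/

import Mathlib

open Matrix


noncomputable def frobSq {a b : ℕ} (M : Matrix (Fin a) (Fin b) ℂ) : ℝ :=
  ∑ i, ∑ j, ‖M i j‖ ^ 2

lemma frobSq_eq_trace {a b : ℕ} (M : Matrix (Fin a) (Fin b) ℂ) :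
    (frobSq M : ℂ) = Matrix.trace (Mᴴ * M) := by
  unfold frobSq
  rw [Matrix.trace]
  push_cast
  rw [Finset.sum_comm]
  congr 1
  ext j
  rw [Matrix.diag, Matrix.mul_apply]
  congr 1
  ext i
  rw [Matrix.conjTranspose_apply, RCLike.star_def, Complex.conj_mul']

lemma frobSq_mul_left {a b c : ℕ} (W : Matrix (Fin a) (Fin b) ℂ) (X : Matrix (Fin b) (Fin c) ℂ)
    (hW : Wᴴ * W = 1) : frobSq (W * X) = frobSq X := by
  have := frobSq_eq_trace (W * X)
  rw [conjTranspose_mul] at this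
  have h2 : Xᴴ * Wᴴ * (W * X) = Xᴴ * X := by
    rw [Matrix.mul_assoc, ← Matrix.mul_assoc Wᴴ, hW, Matrix.one_mul]
  rw [h2, ← frobSq_eq_trace] at this
  exact_mod_cast this

lemma frobSq_mul_right {a b c : ℕ} (X : Matrix (Fin a) (Fin b) ℂ) (W : Matrix (Fin c) (Fin b) ℂ)
    (hW : Wᴴ * W = 1) : frobSq (X * Wᴴ) = frobSq X := by
  have := frobSq_eq_trace (X * Wᴴ)
  rw [conjTranspose_mul, conjTranspose_conjTranspose] at this
  have h2 : W * Xᴴ * (X * Wᴴ) = (W * (Xᴴ * X)) * Wᴴ := by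
    simp [Matrix.mul_assoc]
  rw [h2, Matrix.trace_mul_comm, ← Matrix.mul_assoc, hW, Matrix.one_mul,
    ← frobSq_eq_trace] at this
  exact_mod_cast this


/-- Approximate matrix multiplication from entrywise bounds on singular bases: if
`A = U₁ Σ₁ Vᴴ` and `B = U Σ₂ V₂ᴴ` are SVDs and every entry of `Vᴴ Ωᴴ Ω U - Vᴴ U` has
absolute value at most `ε`, then `‖A Ωᴴ Ω B - A B‖_F ≤ ε ‖A‖_F ‖B‖_F`. -/
theorem stmt_9 {m n p q : ℕ} (ε : ℝ) (hε : 0 < ε)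
    (A : Matrix (Fin p) (Fin n) ℂ) (B : Matrix (Fin n) (Fin q) ℂ)
    (U₁ : Matrix (Fin p) (Fin p) ℂ) (σA : Fin p → ℝ) (hσA : ∀ i, 0 ≤ σA i)
    (V : Matrix (Fin n) (Fin p) ℂ)
    (U : Matrix (Fin n) (Fin q) ℂ) (σB : Fin q → ℝ) (hσB : ∀ j, 0 ≤ σB j)
    (V₂ : Matrix (Fin q) (Fin q) ℂ)
    (hU₁ : U₁ᴴ * U₁ = 1) (hV : Vᴴ * V = 1) (hU : Uᴴ * U = 1) (hV₂ : V₂ᴴ * V₂ = 1)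
    (hA : A = U₁ * Matrix.diagonal (fun i => (σA i : ℂ)) * Vᴴ)
    (hB : B = U * Matrix.diagonal (fun j => (σB j : ℂ)) * V₂ᴴ)
    (Ω : Matrix (Fin m) (Fin n) ℂ)
    (h : ∀ (k : Fin p) (j : Fin q), ‖(Vᴴ * Ωᴴ * Ω * U - Vᴴ * U) k j‖ ≤ ε) :
    Real.sqrt (∑ i, ∑ j, ‖(A * Ωᴴ * Ω * B - A * B) i j‖ ^ 2)
      ≤ ε * Real.sqrt (∑ i, ∑ j, ‖A i j‖ ^ 2) * Real.sqrt (∑ i, ∑ j, ‖B i j‖ ^ 2) := by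
  set D₁ := Matrix.diagonal (fun i => (σA i : ℂ)) with hD₁
  set D₂ := Matrix.diagonal (fun j => (σB j : ℂ)) with hD₂
  set E := Vᴴ * Ωᴴ * Ω * U - Vᴴ * U with hE
  have hfA : frobSq A = ∑ k, σA k ^ 2 := by
    rw [hA, Matrix.mul_assoc, frobSq_mul_left _ _ hU₁, frobSq_mul_right _ _ hV]
    simp [frobSq, hD₁, Matrix.diagonal_apply, apply_ite (fun z : ℂ => ‖z‖), apply_ite (· ^ 2),
      Finset.sum_ite_eq, abs_of_nonneg (hσA _)]
  have hfB : frobSq B = ∑ j, σB j ^ 2 := by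
    rw [hB, Matrix.mul_assoc, frobSq_mul_left _ _ hU, frobSq_mul_right _ _ hV₂]
    simp [frobSq, hD₂, Matrix.diagonal_apply, apply_ite (fun z : ℂ => ‖z‖), apply_ite (· ^ 2),
      Finset.sum_ite_eq, abs_of_nonneg (hσB _)]
  have key : A * Ωᴴ * Ω * B - A * B = U₁ * (D₁ * E * D₂) * V₂ᴴ := by
    rw [hA, hB, hE]
    simp only [Matrix.mul_sub, Matrix.sub_mul, Matrix.mul_assoc]
  have hdiff : frobSq (A * Ωᴴ * Ω * B - A * B) = frobSq (D₁ * E * D₂) := by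
    rw [key, frobSq_mul_right _ _ hV₂, frobSq_mul_left _ _ hU₁]
  have hentry : ∀ (k : Fin p) (j : Fin q),
      ‖(D₁ * E * D₂) k j‖ ^ 2 = σA k ^ 2 * ‖E k j‖ ^ 2 * σB j ^ 2 := by
    intro k j
    rw [Matrix.mul_diagonal, Matrix.diagonal_mul]
    simp [norm_mul, mul_pow, abs_of_nonneg (hσA k), abs_of_nonneg (hσB j)]
  have hbound : frobSq (D₁ * E * D₂) ≤ ε ^ 2 * (∑ k, σA k ^ 2) * (∑ j, σB j ^ 2) := by
    have h1 : frobSq (D₁ * E * D₂) ≤ ∑ k, ∑ j, σA k ^ 2 * ε ^ 2 * σB j ^ 2 := by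
      unfold frobSq
      refine Finset.sum_le_sum fun k _ => Finset.sum_le_sum fun j _ => ?_
      rw [hentry k j]
      have hle : ‖E k j‖ ^ 2 ≤ ε ^ 2 := by
        have := h k j
        nlinarith [norm_nonneg (E k j)]
      gcongr
    refine h1.trans_eq ?_
    simp_rw [← Finset.mul_sum, ← Finset.sum_mul]
    ring
  have hnnA : 0 ≤ ∑ k, σA k ^ 2 := Finset.sum_nonneg fun k _ => sq_nonneg _
  have hnnB : 0 ≤ ∑ j, σB j ^ 2 := Finset.sum_nonneg fun j _ => sq_nonneg _
  show Real.sqrt (frobSq (A * Ωᴴ * Ω * B - A * B))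
      ≤ ε * Real.sqrt (frobSq A) * Real.sqrt (frobSq B)
  rw [hdiff, hfA, hfB]
  calc Real.sqrt (frobSq (D₁ * E * D₂))
      ≤ Real.sqrt (ε ^ 2 * (∑ k, σA k ^ 2) * (∑ j, σB j ^ 2)) := Real.sqrt_le_sqrt hbound
    _ = ε * Real.sqrt (∑ k, σA k ^ 2) * Real.sqrt (∑ j, σB j ^ 2) := by
        rw [Real.sqrt_mul (by positivity), Real.sqrt_mul (by positivity),
          Real.sqrt_sq hε.le, mul_assoc]
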